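/- Let φ_W ∈ (0, π], T ∈ (0, π/2], set φ = −φ_W − T, and assume sin φ ≠ 0. Then there exists a pair (b, c) ∈ ℝ², (b, c) ≠ (0, 0), such that the affine function g(t) = c·t + b satisfies −(1/sin φ)·∫₀ᵀ cos(2|t−s| + φ)·g(s) ds = g(t) for all t ∈ [0,T], if and only if φ_W = π or T = −tan φ_W. (In other words, μ = 1 is an eigenvalue of the integral operator with kernel K(s,t) = −cos(2|t−s| + φ)/sin φ with an affine eigenfunction exactly when (φ_W, T) ∈ D₄ or (φ_W, T) ∈ D₂''.) -/

import Mathlib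

open Real

lemma hasDeriv_left (t φ c b s : ℝ) :
    HasDerivAt (fun s => -((c*s+b) * Real.sin (2*(t-s)+φ)) / 2 + c/4 * Real.cos (2*(t-s)+φ))
      (Real.cos (2*(t-s)+φ) * (c*s+b)) s := by
  have h0 : HasDerivAt (fun s : ℝ => 2*(t-s)+φ) (-2) s := by
    have := (((hasDerivAt_id s).const_sub t).const_mul 2).add_const φ
    exact this.congr_deriv (by ring)
  have hlin : HasDerivAt (fun s : ℝ => c*s+b) c s := by
    have := ((hasDerivAt_id s).const_mul c).add_const b
    exact this.congr_deriv (by ring)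
  have := (((hlin.mul h0.sin).neg).div_const 2).add (h0.cos.const_mul (c/4))
  exact this.congr_deriv (by ring)

lemma hasDeriv_right (t φ c b s : ℝ) :
    HasDerivAt (fun s => (c*s+b) * Real.sin (2*(s-t)+φ) / 2 + c/4 * Real.cos (2*(s-t)+φ))
      (Real.cos (2*(s-t)+φ) * (c*s+b)) s := by
  have h0 : HasDerivAt (fun s : ℝ => 2*(s-t)+φ) 2 s := by
    have := (((hasDerivAt_id s).sub_const t).const_mul 2).add_const φ
    exact this.congr_deriv (by ring)
  have hlin : HasDerivAt (fun s : ℝ => c*s+b) c s := by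
    have := ((hasDerivAt_id s).const_mul c).add_const b
    exact this.congr_deriv (by ring)
  have := ((hlin.mul h0.sin).div_const 2).add (h0.cos.const_mul (c/4))
  exact this.congr_deriv (by ring)

lemma key_integral (φ b c T t : ℝ) (ht0 : 0 ≤ t) (htT : t ≤ T) :
    ∫ s in (0:ℝ)..T, Real.cos (2*|t-s| + φ) * (c*s+b)
      = -(c*t+b)*Real.sin φ + b/2*Real.sin (2*t+φ) - c/4*Real.cos (2*t+φ)
        + (c*T+b)/2*Real.sin (2*(T-t)+φ) + c/4*Real.cos (2*(T-t)+φ) := by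
  have hcont : Continuous fun s : ℝ => Real.cos (2*|t-s| + φ) * (c*s+b) := by
    fun_prop
  have hcl : Continuous fun s : ℝ => Real.cos (2*(t-s) + φ) * (c*s+b) := by fun_prop
  have hcr : Continuous fun s : ℝ => Real.cos (2*(s-t) + φ) * (c*s+b) := by fun_prop
  rw [← intervalIntegral.integral_add_adjacent_intervals (b := t)
    (hcont.intervalIntegrable 0 t) (hcont.intervalIntegrable t T)]
  have h1 : (∫ s in (0:ℝ)..t, Real.cos (2*|t-s|+φ)*(c*s+b))
      = ∫ s in (0:ℝ)..t, Real.cos (2*(t-s)+φ)*(c*s+b) := by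
    apply intervalIntegral.integral_congr
    intro s hs
    rw [Set.uIcc_of_le ht0] at hs
    show Real.cos (2*|t-s|+φ)*(c*s+b) = Real.cos (2*(t-s)+φ)*(c*s+b)
    rw [abs_of_nonneg (by linarith [hs.2] : (0:ℝ) ≤ t - s)]
  have h2 : (∫ s in t..T, Real.cos (2*|t-s|+φ)*(c*s+b))
      = ∫ s in t..T, Real.cos (2*(s-t)+φ)*(c*s+b) := by
    apply intervalIntegral.integral_congr
    intro s hs
    rw [Set.uIcc_of_le htT] at hs
    show Real.cos (2*|t-s|+φ)*(c*s+b) = Real.cos (2*(s-t)+φ)*(c*s+b)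
    rw [abs_of_nonpos (by linarith [hs.1] : t - s ≤ 0), neg_sub]
  rw [h1, h2,
    intervalIntegral.integral_eq_sub_of_hasDerivAt
      (fun s _ => hasDeriv_left t φ c b s) (hcl.intervalIntegrable 0 t),
    intervalIntegral.integral_eq_sub_of_hasDerivAt
      (fun s _ => hasDeriv_right t φ c b s) (hcr.intervalIntegrable t T)]
  have e1 : 2*(t-t)+φ = φ := by ring
  have e2 : 2*(t-0)+φ = 2*t+φ := by ring
  rw [e1, e2]
  ring

lemma G_expand (φW T b c t : ℝ) :
    b/2*Real.sin (2*t+(-φW-T)) - c/4*Real.cos (2*t+(-φW-T))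
      + (c*T+b)/2*Real.sin (2*(T-t)+(-φW-T)) + c/4*Real.cos (2*(T-t)+(-φW-T))
    = ((-(Real.cos T*Real.sin φW))*b
        + (T/2*(Real.sin T*Real.cos φW - Real.cos T*Real.sin φW) + Real.sin T*Real.sin φW/2)*c)
          * Real.cos (2*t)
      + ((-(Real.sin T*Real.sin φW))*b
        + (-(T/2*(Real.cos T*Real.cos φW + Real.sin T*Real.sin φW)) - Real.cos T*Real.sin φW/2)*c)
          * Real.sin (2*t) := by
  rw [show 2*t+(-φW-T) = 2*t - (φW+T) by ring,
      show 2*(T-t)+(-φW-T) = (T-φW) - 2*t by ring,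
      Real.sin_sub (2*t), Real.cos_sub (2*t),
      Real.sin_sub (T-φW), Real.cos_sub (T-φW),
      Real.sin_add, Real.cos_add, Real.sin_sub T φW, Real.cos_sub T φW]
  ring

theorem affine_eigenfunction_mu_one (φW T : ℝ)
    (hφ1 : 0 < φW) (hφ2 : φW ≤ Real.pi) (hT0 : 0 < T) (hT : T ≤ Real.pi / 2)
    (hsin : Real.sin (-φW - T) ≠ 0) :
    (∃ b c : ℝ, (b, c) ≠ ((0:ℝ), (0:ℝ)) ∧
      ∀ t ∈ Set.Icc (0:ℝ) T,
        (-(1 / Real.sin (-φW - T))) *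
          (∫ s in (0:ℝ)..T, Real.cos (2 * |t - s| + (-φW - T)) * (c * s + b))
          = c * t + b) ↔
    (φW = Real.pi ∨ T = -Real.tan φW) := by
  set α := -(Real.cos T*Real.sin φW) with hα
  set β := T/2*(Real.sin T*Real.cos φW - Real.cos T*Real.sin φW) + Real.sin T*Real.sin φW/2 with hβ
  set γ := -(Real.sin T*Real.sin φW) with hγ
  set δ := -(T/2*(Real.cos T*Real.cos φW + Real.sin T*Real.sin φW)) - Real.cos T*Real.sin φW/2 with hδ
  have hdet : α*δ - β*γ = Real.sin φW/2*(T*Real.cos φW + Real.sin φW) := by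
    rw [hα, hβ, hγ, hδ]
    linear_combination (T/2*Real.sin φW*Real.cos φW + Real.sin φW^2/2) * (Real.sin_sq_add_cos_sq T)
  have hsT : 0 < Real.sin T :=
    Real.sin_pos_of_pos_of_lt_pi hT0 (by linarith [Real.pi_pos])
  have hiff : ∀ X Y : ℝ, ((-(1 / Real.sin (-φW - T))) * X = Y) ↔
      (X = -(Real.sin (-φW - T) * Y)) := by
    intro X Y
    constructor
    · intro h
      field_simp at h
      linarith
    · intro h
      rw [h]
      field_simp
  have main : ∀ b c : ℝ, (∀ t ∈ Set.Icc (0:ℝ) T,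
      (-(1 / Real.sin (-φW - T))) *
        (∫ s in (0:ℝ)..T, Real.cos (2 * |t - s| + (-φW - T)) * (c * s + b))
        = c * t + b) ↔ (α*b+β*c = 0 ∧ γ*b+δ*c = 0) := by
    intro b c
    constructor
    · intro h
      have hG : ∀ t ∈ Set.Icc (0:ℝ) T,
          (α*b+β*c) * Real.cos (2*t) + (γ*b+δ*c) * Real.sin (2*t) = 0 := by
        intro t ht
        have h1 := (hiff _ _).1 (h t ht)
        rw [key_integral (-φW-T) b c T t ht.1 ht.2] at h1
        have h3 := G_expand φW T b c t
        rw [← hα, ← hβ, ← hγ, ← hδ] at h3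
        linear_combination h1 - h3
      have hp : α*b+β*c = 0 := by
        have h0 := hG 0 ⟨le_refl 0, le_of_lt hT0⟩
        simpa using h0
      refine ⟨hp, ?_⟩
      have h0 := hG (T/2) ⟨by linarith, by linarith⟩
      rw [show 2*(T/2) = T by ring, hp] at h0
      have h0' : (γ*b+δ*c) * Real.sin T = 0 := by linarith
      rcases mul_eq_zero.1 h0' with h'|h'
      · exact h'
      · exact absurd h' hsT.ne'
    · rintro ⟨hp, hq⟩ t ht
      rw [hiff, key_integral (-φW-T) b c T t ht.1 ht.2]
      have h3 := G_expand φW T b c t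
      rw [← hα, ← hβ, ← hγ, ← hδ, hp, hq] at h3
      linear_combination h3
  constructor
  · rintro ⟨b, c, hbc, h⟩
    obtain ⟨hp, hq⟩ := (main b c).1 h
    have hΔb : (α*δ-β*γ)*b = 0 := by linear_combination δ*hp - β*hq
    have hΔc : (α*δ-β*γ)*c = 0 := by linear_combination α*hq - γ*hp
    have hbc' : b ≠ 0 ∨ c ≠ 0 := by
      by_contra hcon
      push_neg at hcon
      exact hbc (by simp [hcon.1, hcon.2])
    have hΔ : α*δ-β*γ = 0 := by
      rcases hbc' with h'|h'
      · exact (mul_eq_zero.1 hΔb).resolve_right h'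
      · exact (mul_eq_zero.1 hΔc).resolve_right h'
    rw [hdet] at hΔ
    rcases mul_eq_zero.1 hΔ with h'|h'
    · left
      have hs0 : Real.sin φW = 0 := by linarith
      by_contra hne
      exact absurd hs0
        (ne_of_gt (Real.sin_pos_of_pos_of_lt_pi hφ1 (lt_of_le_of_ne hφ2 hne)))
    · right
      have hcφ : Real.cos φW ≠ 0 := by
        intro h0
        rw [h0] at h'
        have hs0 : Real.sin φW = 0 := by linarith
        have := Real.sin_sq_add_cos_sq φW
        rw [hs0, h0] at this
        norm_num at this
      rw [Real.tan_eq_sin_div_cos]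
      field_simp
      linarith
  · intro h
    have hΔ : α*δ-β*γ = 0 := by
      rw [hdet]
      rcases h with h|h
      · rw [h, Real.sin_pi]; ring
      · have hcφ : Real.cos φW ≠ 0 := by
          intro h0
          rw [Real.tan_eq_sin_div_cos, h0, div_zero, neg_zero] at h
          exact absurd h hT0.ne'
        have hTc : T*Real.cos φW + Real.sin φW = 0 := by
          rw [Real.tan_eq_sin_div_cos] at h
          field_simp at h
          linarith
        rw [hTc]; ring
    by_cases hαβ : α = 0 ∧ β = 0
    · by_cases hγδ : γ = 0 ∧ δ = 0
      · exact ⟨1, 0, by simp,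
          (main 1 0).2 ⟨by rw [hαβ.1]; ring, by rw [hγδ.1]; ring⟩⟩
      · refine ⟨δ, -γ, ?_, (main δ (-γ)).2 ⟨by linear_combination hΔ, by ring⟩⟩
        intro hcon
        rw [Prod.mk.injEq] at hcon
        exact hγδ ⟨by linarith [hcon.2], hcon.1⟩
    · refine ⟨β, -α, ?_, (main β (-α)).2 ⟨by ring, by linear_combination -hΔ⟩⟩
      intro hcon
      rw [Prod.mk.injEq] at hcon
      exact hαβ ⟨by linarith [hcon.2], hcon.1⟩
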